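/- Let G₁ be a bipartite graph with Gallai–Edmonds partition of its vertices into even vertices E, odd vertices O, and unreachable vertices U (defined via alternating paths from unmatched vertices with respect to some maximum matching). Then in every maximum matching of G₁, every vertex of U is matched to another vertex of U and every vertex of O is matched to some vertex of E; no maximum matching contains an edge joining a vertex of O to a vertex of O ∪ U; and the size of a maximum matching equals |O| + |U|/2. -/

import Mathlib

/-- `M` is a matching of the graph `G`: a set of edges of `G` in which every vertex
lies in at most one edge. -/
def IsGraphMatching {V : Type*} (G : SimpleGraph V) (M : Set (Sym2 V)) : Prop :=
  M ⊆ G.edgeSet ∧ ∀ e ∈ M, ∀ e' ∈ M, ∀ v : V, v ∈ e → v ∈ e' → e = e'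

/-- A maximum (cardinality) matching of `G`. -/
def IsMaximumMatching {V : Type*} (G : SimpleGraph V) (M : Set (Sym2 V)) : Prop :=
  IsGraphMatching G M ∧ ∀ N : Set (Sym2 V), IsGraphMatching G N → N.ncard ≤ M.ncard

/-- A vertex is unmatched by `M` if it lies in no edge of `M`. -/
def UnmatchedVtx {V : Type*} (M : Set (Sym2 V)) (v : V) : Prop := ∀ e ∈ M, v ∉ e

/-- A walk is alternating with respect to the matching `M` (as a walk starting at an
unmatched vertex) if its edges alternately avoid and belong to `M`, starting with an
edge not in `M`. -/
def IsAlternatingWalk {V : Type*} {G : SimpleGraph V} {u v : V} (M : Set (Sym2 V))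
    (p : G.Walk u v) : Prop :=
  ∀ (i : ℕ) (h : i < p.edges.length), (p.edges.get ⟨i, h⟩ ∈ M ↔ i % 2 = 1)

/-- `v` is an even vertex: there is an even-length alternating path from some
`M`-unmatched vertex to `v`. -/
def EvenVtx {V : Type*} (G : SimpleGraph V) (M : Set (Sym2 V)) (v : V) : Prop :=
  ∃ u, UnmatchedVtx M u ∧ ∃ p : G.Walk u v, p.IsPath ∧ IsAlternatingWalk M p ∧ Even p.length

/-- `v` is an odd vertex: there is an odd-length alternating path from some
`M`-unmatched vertex to `v`. -/
def OddVtx {V : Type*} (G : SimpleGraph V) (M : Set (Sym2 V)) (v : V) : Prop :=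
  ∃ u, UnmatchedVtx M u ∧ ∃ p : G.Walk u v, p.IsPath ∧ IsAlternatingWalk M p ∧ Odd p.length

/-- `v` is unreachable: no alternating path from an `M`-unmatched vertex reaches `v`. -/
def UnreachableVtx {V : Type*} (G : SimpleGraph V) (M : Set (Sym2 V)) (v : V) : Prop :=
  ¬ ∃ u, UnmatchedVtx M u ∧ ∃ p : G.Walk u v, p.IsPath ∧ IsAlternatingWalk M p

/-- `G` is bipartite. -/
def IsBipartite {V : Type*} (G : SimpleGraph V) : Prop :=
  ∃ s : Set V, ∀ ⦃u v : V⦄, G.Adj u v → (u ∈ s ↔ v ∉ s)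




section AltList
variable {α : Type*}

def AltFrom (M : Set α) (k : ℕ) (l : List α) : Prop :=
  ∀ i (h : i < l.length), (l.get ⟨i, h⟩ ∈ M ↔ (k + i) % 2 = 1)

lemma altFrom_iff {M : Set α} {k : ℕ} {l : List α} :
    AltFrom M k l ↔ ∀ i (h : i < l.length), (l[i] ∈ M ↔ (k + i) % 2 = 1) := Iff.rfl

lemma altFrom_congr {M : Set α} {k k' : ℕ} (hk : k % 2 = k' % 2) {l : List α}
    (h : AltFrom M k l) : AltFrom M k' l := by
  intro i hi
  have h' := h i hi
  have : (k + i) % 2 = (k' + i) % 2 := by omega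
  rwa [this] at h'

lemma altFrom_append {M : Set α} {k : ℕ} {l₁ l₂ : List α} :
    AltFrom M k (l₁ ++ l₂) ↔ AltFrom M k l₁ ∧ AltFrom M (k + l₁.length) l₂ := by
  rw [altFrom_iff, altFrom_iff, altFrom_iff]
  constructor
  · intro h
    constructor
    · intro i hi
      have hi' : i < (l₁ ++ l₂).length := by simp; omega
      have := h i hi'
      rwa [List.getElem_append_left hi] at this
    · intro i hi
      have hi' : l₁.length + i < (l₁ ++ l₂).length := by simp; omega
      have := h (l₁.length + i) hi'
      rw [List.getElem_append_right (Nat.le_add_right _ _)] at this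
      simp only [Nat.add_sub_cancel_left] at this
      rw [this]
      omega
  · rintro ⟨h1, h2⟩ i hi
    rcases lt_or_ge i l₁.length with hc | hc
    · rw [List.getElem_append_left hc]
      exact h1 i hc
    · have hi2 : i - l₁.length < l₂.length := by simp at hi; omega
      rw [List.getElem_append_right hc]
      rw [h2 (i - l₁.length) hi2]
      omega

lemma altFrom_reverse_even {M : Set α} {l : List α} (h : AltFrom M 0 l)
    (hl : l.length % 2 = 0) : AltFrom M 1 l.reverse := by
  rw [altFrom_iff] at h ⊢
  intro i hi
  rw [List.length_reverse] at hi
  rw [List.getElem_reverse]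
  rw [h (l.length - 1 - i) (by omega)]
  omega

end AltList

section WalkLemmas
open SimpleGraph
variable {V : Type*} {G : SimpleGraph V} {M : Set (Sym2 V)}

lemma isAlternatingWalk_iff_altFrom {u v : V} {p : G.Walk u v} :
    IsAlternatingWalk M p ↔ AltFrom M 0 p.edges := by
  unfold IsAlternatingWalk AltFrom
  simp [Nat.zero_add]

lemma walk_edges_getElem {u v : V} (p : G.Walk u v) :
    ∀ (i : ℕ) (h : i < p.edges.length),
      p.edges[i] = s(p.getVert i, p.getVert (i + 1)) := by
  induction p with
  | nil => intro i h; simp at h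
  | cons _ q ih =>
    intro i h
    cases i with
    | zero => simp [SimpleGraph.Walk.edges_cons, SimpleGraph.Walk.getVert_zero,
        SimpleGraph.Walk.getVert_cons_succ]
    | succ n =>
      simp only [SimpleGraph.Walk.edges_cons, List.getElem_cons_succ,
        SimpleGraph.Walk.getVert_cons_succ]
      exact ih n (by simp only [SimpleGraph.Walk.edges_cons, List.length_cons] at h; omega)

lemma path_getVert_inj {u v : V} {p : G.Walk u v} (hp : p.IsPath) :
    ∀ i ≤ p.length, ∀ j ≤ p.length, p.getVert i = p.getVert j → i = j := by
  induction p with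
  | nil => intro i hi j hj _; simp at hi hj; omega
  | cons h q ih =>
    rw [SimpleGraph.Walk.cons_isPath_iff] at hp
    intro i hi j hj hij
    cases i with
    | zero =>
      cases j with
      | zero => rfl
      | succ m =>
        exfalso
        rw [SimpleGraph.Walk.getVert_zero, SimpleGraph.Walk.getVert_cons_succ] at hij
        exact hp.2 (SimpleGraph.Walk.mem_support_iff_exists_getVert.mpr
          ⟨m, hij.symm, by simpa using hj⟩)
    | succ n =>
      cases j with
      | zero =>
        exfalso
        rw [SimpleGraph.Walk.getVert_zero, SimpleGraph.Walk.getVert_cons_succ] at hij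
        exact hp.2 (SimpleGraph.Walk.mem_support_iff_exists_getVert.mpr
          ⟨n, hij, by simpa using hi⟩)
      | succ m =>
        rw [SimpleGraph.Walk.getVert_cons_succ, SimpleGraph.Walk.getVert_cons_succ] at hij
        have := ih hp.1 n (by simpa using hi) m (by simpa using hj) hij
        omega

lemma bip_parity {s : Set V} (hs : ∀ ⦃a b : V⦄, G.Adj a b → (a ∈ s ↔ b ∉ s))
    {a b : V} (p : G.Walk a b) : Even p.length ↔ (a ∈ s ↔ b ∈ s) := by
  induction p with
  | nil => simp
  | cons h q ih =>
    rw [SimpleGraph.Walk.length_cons]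
    rw [Nat.even_add_one, ih]
    have := hs h
    tauto

end WalkLemmas

section Augment
open SimpleGraph
variable {V : Type*} [Fintype V] {G : SimpleGraph V}

lemma isAlternatingWalk_iff' {M : Set (Sym2 V)} {u v : V} {p : G.Walk u v} :
    IsAlternatingWalk M p ↔ ∀ i (h : i < p.edges.length), (p.edges[i] ∈ M ↔ i % 2 = 1) :=
  Iff.rfl

lemma augment_aux (n : ℕ) (M : Set (Sym2 V)) (hM : IsGraphMatching G M)
    (a b : V) (P : G.Walk a b) (hlen : P.length ≤ n) (hP : P.IsPath)
    (halt : IsAlternatingWalk M P) (hodd : P.length % 2 = 1)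
    (ha : UnmatchedVtx M a) (hb : UnmatchedVtx M b) :
    ∃ N : Set (Sym2 V), IsGraphMatching G N ∧ N.ncard = M.ncard + 1 := by
  induction n generalizing M a b with
  | zero => omega
  | succ n ih =>
    cases P with
    | nil => simp at hodd
    | @cons _ x _ h₁ Q =>
      cases Q with
      | nil =>
        -- single edge s(a, b)
        refine ⟨insert s(a, b) M, ⟨?_, ?_⟩, ?_⟩
        · exact Set.insert_subset (G.mem_edgeSet.mpr h₁) hM.1
        · intro e he e' he' t ht ht'
          rcases he with rfl | he <;> rcases he' with rfl | he'
          · rfl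
          · exfalso
            rcases Sym2.mem_iff.mp ht with rfl | rfl
            · exact ha e' he' ht'
            · exact hb e' he' ht'
          · exfalso
            rcases Sym2.mem_iff.mp ht' with rfl | rfl
            · exact ha e he ht
            · exact hb e he ht
          · exact hM.2 e he e' he' t ht ht'
        · refine Set.ncard_insert_of_notMem (fun hmem => ?_) (Set.toFinite M)
          exact ha _ hmem (Sym2.mem_mk_left a b)
      | @cons _ y _ h₂ P' =>
        -- a -e₀- x -e₁- y, P' : y → b
        set e₀ : Sym2 V := s(a, x) with he₀def
        set e₁ : Sym2 V := s(x, y) with he₁def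
        rw [isAlternatingWalk_iff'] at halt
        have hlenP : (Walk.cons h₁ (Walk.cons h₂ P')).edges.length = P'.length + 2 := by
          simp [Walk.edges_cons]
        have he₀ : e₀ ∉ M := by
          have := halt 0 (by simp [Walk.edges_cons])
          simpa [Walk.edges_cons] using this
        have he₁ : e₁ ∈ M := by
          have := halt 1 (by simp [Walk.edges_cons])
          simpa [Walk.edges_cons] using this
        -- path facts
        have hPfull := hP
        rw [Walk.cons_isPath_iff] at hP
        have hQ := hP.1
        have haQ := hP.2
        rw [Walk.cons_isPath_iff] at hQ
        have hP' := hQ.1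
        have hxP' : x ∉ P'.support := hQ.2
        rw [Walk.support_cons, List.mem_cons] at haQ
        push_neg at haQ
        have hax : a ≠ x := haQ.1
        have haP' : a ∉ P'.support := haQ.2
        have hay : a ≠ y := fun h => haP' (h ▸ P'.start_mem_support)
        have hxy : x ≠ y := fun h => hxP' (h ▸ P'.start_mem_support)
        have hab : a ≠ b := fun h => haP' (h ▸ P'.end_mem_support)
        have hxb : x ≠ b := fun h => hxP' (h ▸ P'.end_mem_support)
        -- new matching
        set M' : Set (Sym2 V) := insert e₀ (M \ {e₁}) with hM'def
        have hxonly : ∀ e ∈ M, x ∈ e → e = e₁ := fun e he hx =>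
          hM.2 e he e₁ he₁ x hx (Sym2.mem_mk_left x y)
        have hyonly : ∀ e ∈ M, y ∈ e → e = e₁ := fun e he hy =>
          hM.2 e he e₁ he₁ y hy (Sym2.mem_mk_right x y)
        have hM' : IsGraphMatching G M' := by
          constructor
          · exact Set.insert_subset (G.mem_edgeSet.mpr h₁) ((Set.diff_subset).trans hM.1)
          · intro e he e' he' t ht ht'
            rcases he with rfl | he <;> rcases he' with rfl | he'
            · rfl
            · exfalso
              rcases Sym2.mem_iff.mp ht with rfl | rfl
              · exact ha e' he'.1 ht'
              · exact he'.2 (hxonly e' he'.1 ht')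
            · exfalso
              rcases Sym2.mem_iff.mp ht' with rfl | rfl
              · exact ha e he.1 ht
              · exact he.2 (hxonly e he.1 ht)
            · exact hM.2 e he.1 e' he'.1 t ht ht'
        have hy' : UnmatchedVtx M' y := by
          intro e he hy
          rcases he with rfl | he
          · rcases Sym2.mem_iff.mp hy with rfl | rfl
            · exact hay rfl
            · exact hxy rfl
          · exact he.2 (hyonly e he.1 hy)
        have hb' : UnmatchedVtx M' b := by
          intro e he hbe
          rcases he with rfl | he
          · rcases Sym2.mem_iff.mp hbe with rfl | rfl
            · exact hab rfl
            · exact hxb rfl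
          · exact hb e he.1 hbe
        have hnodup : (Walk.cons h₁ (Walk.cons h₂ P')).edges.Nodup :=
          hPfull.isTrail.edges_nodup
        have halt' : IsAlternatingWalk M' P' := by
          rw [isAlternatingWalk_iff']
          intro i hi
          have hi2 : i + 2 < (Walk.cons h₁ (Walk.cons h₂ P')).edges.length := by
            rw [hlenP]; rw [Walk.length_edges] at hi; omega
          have hEi : (Walk.cons h₁ (Walk.cons h₂ P')).edges[i+2] = P'.edges[i] := by
            simp [Walk.edges_cons]
          have hi0 : (0:ℕ) < (Walk.cons h₁ (Walk.cons h₂ P')).edges.length := by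
            rw [hlenP]; omega
          have hi1 : (1:ℕ) < (Walk.cons h₁ (Walk.cons h₂ P')).edges.length := by
            rw [hlenP]; omega
          have hne₀ : P'.edges[i] ≠ e₀ := by
            intro hcon
            have h0 : (Walk.cons h₁ (Walk.cons h₂ P')).edges[0]'hi0 = e₀ := by
              simp [Walk.edges_cons, he₀def]
            have heq : (Walk.cons h₁ (Walk.cons h₂ P')).edges[i+2]'hi2
                = (Walk.cons h₁ (Walk.cons h₂ P')).edges[0]'hi0 := by
              rw [hEi, hcon, h0]
            have := hnodup.getElem_inj_iff.mp heq
            omega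
          have hne₁ : P'.edges[i] ≠ e₁ := by
            intro hcon
            have h1 : (Walk.cons h₁ (Walk.cons h₂ P')).edges[1]'hi1 = e₁ := by
              simp [Walk.edges_cons, he₁def]
            have heq : (Walk.cons h₁ (Walk.cons h₂ P')).edges[i+2]'hi2
                = (Walk.cons h₁ (Walk.cons h₂ P')).edges[1]'hi1 := by
              rw [hEi, hcon, h1]
            have := hnodup.getElem_inj_iff.mp heq
            omega
          have := halt (i + 2) hi2
          rw [hEi] at this
          rw [show (i+2) % 2 = i % 2 by omega] at this
          rw [← this]
          simp only [hM'def, Set.mem_insert_iff, Set.mem_diff, Set.mem_singleton_iff]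
          constructor
          · rintro (h | h)
            · exact absurd h hne₀
            · exact h.1
          · intro h
            exact Or.inr ⟨h, hne₁⟩
        have hlenP' : P'.length ≤ n := by
          simp only [Walk.length_cons] at hlen; omega
        have hoddP' : P'.length % 2 = 1 := by
          simp only [Walk.length_cons] at hodd; omega
        obtain ⟨N, hN, hNcard⟩ := ih M' hM' y b P' hlenP' hP' halt' hoddP' hy' hb'
        refine ⟨N, hN, ?_⟩
        rw [hNcard, hM'def]
        have h1 : e₀ ∉ M \ {e₁} := fun h => he₀ h.1
        rw [Set.ncard_insert_of_notMem h1 (Set.toFinite _)]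
        rw [Set.ncard_diff_singleton_add_one he₁ (Set.toFinite _)]

end Augment


section Shorten
open SimpleGraph
variable {V : Type*} {G : SimpleGraph V} {M : Set (Sym2 V)}

lemma shorten_aux {s : Set V} (hs : ∀ ⦃a b : V⦄, G.Adj a b → (a ∈ s ↔ b ∉ s))
    (n : ℕ) (a b : V) (W : G.Walk a b) (hlen : W.length ≤ n)
    (halt : IsAlternatingWalk M W) :
    ∃ P : G.Walk a b, P.IsPath ∧ IsAlternatingWalk M P := by
  classical
  induction n generalizing a b W with
  | zero =>
    cases W with
    | nil => exact ⟨SimpleGraph.Walk.nil, SimpleGraph.Walk.IsPath.nil, halt⟩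
    | cons h q => simp at hlen
  | succ n ih =>
    by_cases hP : W.IsPath
    · exact ⟨W, hP, halt⟩
    · rw [SimpleGraph.Walk.isPath_def] at hP
      rw [List.nodup_iff_count_le_one] at hP
      push_neg at hP
      obtain ⟨x, hx2⟩ := hP
      have hxmem : x ∈ W.support := by
        rw [← List.count_pos_iff]
        omega
      set t := W.takeUntil x hxmem with htdef
      set d := W.dropUntil x hxmem with hddef
      have hspec : t.append d = W := SimpleGraph.Walk.take_spec W hxmem
      have hsupp : W.support = t.support ++ d.support.tail := by
        rw [← hspec, SimpleGraph.Walk.support_append]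
      have hcount1 : t.support.count x = 1 :=
        SimpleGraph.Walk.count_support_takeUntil_eq_one W hxmem
      have hxtail : x ∈ d.support.tail := by
        rw [hsupp, List.count_append, hcount1] at hx2
        rw [← List.count_pos_iff]
        omega
      cases hd : d with
      | nil => rw [hd] at hxtail; simp at hxtail
      | @cons _ y _ h₂ d₂ =>
        rw [hd] at hxtail
        rw [SimpleGraph.Walk.support_cons, List.tail_cons] at hxtail
        have hxd₂ : x ∈ d₂.support := hxtail
        set t₂ := d₂.takeUntil x hxd₂ with ht₂def
        set d₃ := d₂.dropUntil x hxd₂ with hd₃def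
        have hspec₂ : t₂.append d₃ = d₂ := SimpleGraph.Walk.take_spec d₂ hxd₂
        set W' : G.Walk a b := t.append d₃ with hW'def
        -- length bound
        have hlW : W.length = t.length + (1 + (t₂.length + d₃.length)) := by
          rw [← hspec, SimpleGraph.Walk.length_append, hd, SimpleGraph.Walk.length_cons,
            ← hspec₂, SimpleGraph.Walk.length_append]
          omega
        have hlW' : W'.length ≤ n := by
          rw [hW'def, SimpleGraph.Walk.length_append]
          omega
        -- parity of the cycle x -> y -> ... -> x
        have hcyc : Even ((SimpleGraph.Walk.cons h₂ t₂).length) := by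
          rw [bip_parity hs]
        have ht₂odd : t₂.length % 2 = 1 := by
          rw [SimpleGraph.Walk.length_cons] at hcyc
          rw [Nat.even_add_one] at hcyc
          rw [Nat.not_even_iff] at hcyc
          exact hcyc
        -- alternation
        rw [isAlternatingWalk_iff_altFrom] at halt
        have hedges : W.edges = t.edges ++ ([s(x, y)] ++ (t₂.edges ++ d₃.edges)) := by
          rw [← hspec, SimpleGraph.Walk.edges_append, hd, SimpleGraph.Walk.edges_cons,
            ← hspec₂, SimpleGraph.Walk.edges_append]
          simp
        rw [hedges] at halt
        rw [altFrom_append] at halt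
        have h1 := halt.1
        have h2 := halt.2
        rw [altFrom_append] at h2
        have h3 := h2.2
        rw [altFrom_append] at h3
        have h4 := h3.2
        have hphase : (0 + t.edges.length + [s(x,y)].length + t₂.edges.length) % 2
            = (0 + t.edges.length) % 2 := by
          simp only [List.length_singleton, SimpleGraph.Walk.length_edges]
          omega
        have h4' := altFrom_congr hphase h4
        have halt' : AltFrom M 0 W'.edges := by
          rw [hW'def, SimpleGraph.Walk.edges_append, altFrom_append]
          exact ⟨h1, h4'⟩
        rw [← isAlternatingWalk_iff_altFrom] at halt'
        exact ih a b W' hlW' halt'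

end Shorten

section Structure
open SimpleGraph
variable {V : Type*} {G : SimpleGraph V} {M : Set (Sym2 V)}

lemma noAugPath [Fintype V] (hmax : IsMaximumMatching G M) {a b : V} (P : G.Walk a b)
    (hP : P.IsPath) (halt : IsAlternatingWalk M P) (hodd : P.length % 2 = 1)
    (ha : UnmatchedVtx M a) (hb : UnmatchedVtx M b) : False := by
  obtain ⟨N, hN, hNc⟩ := augment_aux P.length M hmax.1 a b P le_rfl hP halt hodd ha hb
  have := hmax.2 N hN
  omega

lemma evenVtx_of_unmatched {v : V} (hv : UnmatchedVtx M v) : EvenVtx G M v :=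
  ⟨v, hv, Walk.nil, Walk.IsPath.nil, fun i h => by simp at h, by simp⟩

lemma isPath_concat {u v w : V} {p : G.Walk u v} (hp : p.IsPath) (h : G.Adj v w)
    (hw : w ∉ p.support) : (p.concat h).IsPath := by
  rw [← Walk.isPath_reverse_iff, Walk.reverse_concat, Walk.cons_isPath_iff]
  exact ⟨hp.reverse, by rwa [Walk.support_reverse, List.mem_reverse]⟩

lemma alt_concat_iff {u x v : V} {q : G.Walk u x} {h : G.Adj x v} :
    IsAlternatingWalk M (q.concat h) ↔
      IsAlternatingWalk M q ∧ (s(x, v) ∈ M ↔ q.length % 2 = 1) := by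
  rw [isAlternatingWalk_iff_altFrom, isAlternatingWalk_iff_altFrom]
  rw [Walk.edges_concat, List.concat_eq_append, altFrom_append]
  constructor
  · rintro ⟨h1, h2⟩
    refine ⟨h1, ?_⟩
    have := h2 0 (by simp)
    simpa [Walk.length_edges] using this
  · rintro ⟨h1, h2⟩
    refine ⟨h1, ?_⟩
    intro i hi
    simp only [List.length_singleton] at hi
    interval_cases i
    simpa [Walk.length_edges] using h2

lemma isAlternatingWalk_concat {u v w : V} {p : G.Walk u v} (halt : IsAlternatingWalk M p)
    (h : G.Adj v w) (hmem : s(v, w) ∈ M ↔ p.length % 2 = 1) :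
    IsAlternatingWalk M (p.concat h) :=
  alt_concat_iff.mpr ⟨halt, hmem⟩

lemma isAlternatingWalk_takeUntil [DecidableEq V] {u v x : V} {p : G.Walk u v}
    (halt : IsAlternatingWalk M p) (hx : x ∈ p.support) :
    IsAlternatingWalk M (p.takeUntil x hx) := by
  rw [isAlternatingWalk_iff_altFrom] at halt ⊢
  rw [← Walk.take_spec p hx, Walk.edges_append, altFrom_append] at halt
  exact halt.1

lemma not_unreachable_of_mem_support {x u v : V} {p : G.Walk u v} (hu : UnmatchedVtx M u)
    (hp : p.IsPath) (halt : IsAlternatingWalk M p) (hx : x ∈ p.support) :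
    ¬ UnreachableVtx G M x := by
  classical
  intro hun
  exact hun ⟨u, hu, p.takeUntil x hx, hp.takeUntil hx, isAlternatingWalk_takeUntil halt hx⟩

lemma oddVtx_not_unreachable {v : V} (h : OddVtx G M v) : ¬ UnreachableVtx G M v := by
  obtain ⟨u, hu, p, hp, ha, _⟩ := h
  exact fun hun => hun ⟨u, hu, p, hp, ha⟩

lemma evenVtx_not_unreachable {v : V} (h : EvenVtx G M v) : ¬ UnreachableVtx G M v := by
  obtain ⟨u, hu, p, hp, ha, _⟩ := h
  exact fun hun => hun ⟨u, hu, p, hp, ha⟩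

lemma vtx_trichotomy (G : SimpleGraph V) (M : Set (Sym2 V)) (v : V) :
    EvenVtx G M v ∨ OddVtx G M v ∨ UnreachableVtx G M v := by
  by_cases h : UnreachableVtx G M v
  · exact Or.inr (Or.inr h)
  · rw [UnreachableVtx] at h
    push_neg at h
    obtain ⟨u, hu, p, hp, ha⟩ := h
    rcases Nat.even_or_odd p.length with he | ho
    · exact Or.inl ⟨u, hu, p, hp, ha, he⟩
    · exact Or.inr (Or.inl ⟨u, hu, p, hp, ha, ho⟩)

lemma exists_concat_of_length_ne_zero {u v : V} (p : G.Walk u v) (hne : p.length ≠ 0) :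
    ∃ (x : V) (q : G.Walk u x) (h : G.Adj x v), p = q.concat h := by
  cases p with
  | nil => simp at hne
  | cons h q =>
    obtain ⟨x, q', h', heq⟩ := Walk.exists_cons_eq_concat h q
    exact ⟨x, q', h', heq⟩

lemma isPath_of_concat {u x v : V} {q : G.Walk u x} {h : G.Adj x v}
    (hp : (q.concat h).IsPath) : q.IsPath := by
  rw [← Walk.isPath_reverse_iff, Walk.reverse_concat, Walk.cons_isPath_iff] at hp
  exact (Walk.isPath_reverse_iff q).mp hp.1

lemma evenVtx_matched (hM : IsGraphMatching G M) {v : V} (hv : EvenVtx G M v)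
    (hvm : ¬ UnmatchedVtx M v) :
    ∃ x, OddVtx G M x ∧ s(x, v) ∈ M ∧ ∀ e ∈ M, v ∈ e → e = s(x, v) := by
  obtain ⟨u, hu, p, hp, halt, hev⟩ := hv
  have hne : p.length ≠ 0 := by
    intro h0
    exact hvm ((Walk.eq_of_length_eq_zero h0) ▸ hu)
  obtain ⟨x, q, h, rfl⟩ := exists_concat_of_length_ne_zero p hne
  rw [alt_concat_iff] at halt
  have hlq : (q.concat h).length = q.length + 1 := Walk.length_concat _ _
  have hqodd : q.length % 2 = 1 := by
    rw [Nat.even_iff, hlq] at hev; omega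
  have hmem : s(x, v) ∈ M := halt.2.mpr hqodd
  exact ⟨x, ⟨u, hu, q, isPath_of_concat hp, halt.1, Nat.odd_iff.mpr hqodd⟩, hmem,
    fun e he hve => hM.2 e he _ hmem v hve (Sym2.mem_mk_right x v)⟩

lemma oddVtx_matched [Fintype V] (hmax : IsMaximumMatching G M) {v : V} (hv : OddVtx G M v) :
    ∃ w, s(v, w) ∈ M ∧ EvenVtx G M w ∧ ∀ e ∈ M, v ∈ e → e = s(v, w) := by
  obtain ⟨u, hu, p, hp, halt, hoddlen⟩ := hv
  have hodd2 : p.length % 2 = 1 := Nat.odd_iff.mp hoddlen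
  have hvm : ¬ UnmatchedVtx M v := fun hvum => noAugPath hmax p hp halt hodd2 hu hvum
  rw [UnmatchedVtx] at hvm
  push_neg at hvm
  obtain ⟨e, he, hve⟩ := hvm
  obtain ⟨w, rfl⟩ := Sym2.mem_iff_exists.mp hve
  have hadj : G.Adj v w := G.mem_edgeSet.mp (hmax.1.1 he)
  have hvw : v ≠ w := hadj.ne
  have huniq : ∀ e' ∈ M, v ∈ e' → e' = s(v, w) := fun e' he' hv' =>
    hmax.1.2 e' he' _ he v hv' (Sym2.mem_mk_left v w)
  have hinj := path_getVert_inj hp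
  have hwsupp : w ∉ p.support := by
    intro hw
    rw [Walk.mem_support_iff_exists_getVert] at hw
    obtain ⟨j, hjv, hjle⟩ := hw
    have hjlt : j < p.length := by
      rcases Nat.lt_or_ge j p.length with h' | h'
      · exact h'
      · exfalso
        have hj : j = p.length := by omega
        rw [hj, Walk.getVert_length] at hjv
        exact hvw hjv
    rcases Nat.eq_zero_or_pos j with rfl | hj0
    · rw [Walk.getVert_zero] at hjv
      exact hu _ he (hjv ▸ Sym2.mem_mk_right v w)
    · -- find odd path-edge index k containing position j
      obtain ⟨k, hkodd, hklt, hjk⟩ : ∃ k, k % 2 = 1 ∧ k < p.length ∧ (j = k ∨ j = k + 1) := by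
        rcases Nat.even_or_odd j with hj | hj
        · exact ⟨j - 1, by rw [Nat.even_iff] at hj; omega, by omega, Or.inr (by omega)⟩
        · exact ⟨j, Nat.odd_iff.mp hj, hjlt, Or.inl rfl⟩
      have hklen : k < p.edges.length := by rw [Walk.length_edges]; exact hklt
      have hek : p.edges[k] ∈ M := (halt k hklen).mpr hkodd
      have hekval : p.edges[k] = s(p.getVert k, p.getVert (k + 1)) :=
        walk_edges_getElem p k hklen
      have hwk : w ∈ p.edges[k] := by
        rw [hekval]
        rcases hjk with rfl | rfl
        · exact hjv ▸ Sym2.mem_mk_left _ _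
        · exact hjv ▸ Sym2.mem_mk_right _ _
      have heqe : p.edges[k] = s(v, w) :=
        hmax.1.2 _ hek _ he w hwk (Sym2.mem_mk_right v w)
      have hvk : v ∈ p.edges[k] := heqe ▸ Sym2.mem_mk_left v w
      rw [hekval] at hvk
      have hvlen : p.getVert p.length = v := Walk.getVert_length p
      rcases Sym2.mem_iff.mp hvk with hveq | hveq
      · have := hinj p.length le_rfl k (by omega) (hvlen.trans hveq)
        omega
      · have := hinj p.length le_rfl (k + 1) (by omega) (hvlen.trans hveq)
        omega
  refine ⟨w, he, ⟨u, hu, p.concat hadj, isPath_concat hp hadj hwsupp,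
    isAlternatingWalk_concat halt hadj (by simp [he, hodd2]), ?_⟩, huniq⟩
  rw [Walk.length_concat, Nat.even_iff]
  omega

lemma even_odd_disjoint [Fintype V] (hbip : _root_.IsBipartite G) (hmax : IsMaximumMatching G M)
    {v : V} (hev : EvenVtx G M v) (hod : OddVtx G M v) : False := by
  obtain ⟨sSet, hs⟩ := hbip
  obtain ⟨u₁, hu₁, p, hp, haltp, hpe⟩ := hev
  obtain ⟨u₂, hu₂, q, hq, haltq, hqo⟩ := hod
  have hq1 : ¬ Even q.length := Nat.not_even_iff_odd.mpr hqo
  have hside1 : (u₁ ∈ sSet ↔ v ∈ sSet) := (bip_parity hs p).mp hpe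
  have hside2 : ¬ (u₂ ∈ sSet ↔ v ∈ sSet) := fun hcon => hq1 ((bip_parity hs q).mpr hcon)
  set W := q.append p.reverse with hW
  have haltW : IsAlternatingWalk M W := by
    rw [isAlternatingWalk_iff_altFrom, hW, Walk.edges_append, altFrom_append]
    refine ⟨isAlternatingWalk_iff_altFrom.mp haltq, ?_⟩
    rw [Walk.edges_reverse]
    have h1 : AltFrom M 1 p.edges.reverse :=
      altFrom_reverse_even (isAlternatingWalk_iff_altFrom.mp haltp) (by rw [Walk.length_edges, ← Nat.even_iff]; exact hpe)
    refine altFrom_congr ?_ h1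
    have : q.edges.length % 2 = 1 := by
      rw [Walk.length_edges]; exact Nat.odd_iff.mp hqo
    omega
  obtain ⟨P, hPpath, hPalt⟩ := shorten_aux hs W.length u₂ u₁ W le_rfl haltW
  have hPodd : P.length % 2 = 1 := by
    have hiff := bip_parity hs P
    have hne : ¬ (u₂ ∈ sSet ↔ u₁ ∈ sSet) := by tauto
    have : ¬ Even P.length := fun hcon => hne (hiff.mp hcon)
    rw [Nat.even_iff] at this
    omega
  exact noAugPath hmax P hPpath hPalt hPodd hu₂ hu₁

lemma no_EE_edge [Fintype V] (hbip : _root_.IsBipartite G) (hmax : IsMaximumMatching G M)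
    {v w : V} (hadj : G.Adj v w) (hv : EvenVtx G M v) (hw : EvenVtx G M w) : False := by
  classical
  by_cases hm : s(v, w) ∈ M
  · have hvm : ¬ UnmatchedVtx M v := fun h => h _ hm (Sym2.mem_mk_left v w)
    obtain ⟨x, hxodd, hxe, huniq⟩ := evenVtx_matched hmax.1 hv hvm
    have heq : s(v, w) = s(x, v) := huniq _ hm (Sym2.mem_mk_left v w)
    have hwx : w = x := by
      rcases Sym2.eq_iff.mp heq with ⟨h1, h2⟩ | ⟨h1, h2⟩
      · exact absurd h2.symm hadj.ne
      · exact h2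
    exact even_odd_disjoint hbip hmax hw (hwx ▸ hxodd)
  · obtain ⟨u, hu, p, hp, halt, hev⟩ := hv
    by_cases hws : w ∈ p.support
    · set q := p.takeUntil w hws with hqdef
      have hqp : q.IsPath := hp.takeUntil hws
      have hqalt : IsAlternatingWalk M q := isAlternatingWalk_takeUntil halt hws
      rcases Nat.even_or_odd q.length with hqe | hqo
      · -- extend q by edge (w, v)
        have hvq : v ∉ q.support := by
          intro hvq
          have hspec := Walk.take_spec p hws
          have hnodup : p.support.Nodup := hp.support_nodup
          have hdne : (p.dropUntil w hws).length ≠ 0 := fun h0 =>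
            hadj.ne' (Walk.eq_of_length_eq_zero h0)
          have hvd : v ∈ (p.dropUntil w hws).support.tail := by
            have hv_end : v ∈ (p.dropUntil w hws).support := Walk.end_mem_support _
            cases hdrop : p.dropUntil w hws with
            | nil => rw [hdrop] at hdne; simp at hdne
            | cons h' d' =>
              rw [hdrop, Walk.support_cons, List.mem_cons] at hv_end
              rcases hv_end with heq | hmem
              · exact absurd heq.symm hadj.ne'
              · exact hmem
          have hps : p.support = q.support ++ (p.dropUntil w hws).support.tail := by
            rw [hqdef, ← Walk.support_append, hspec]
          rw [hps] at hnodup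
          have hdisj := (List.nodup_append'.mp hnodup).2.2
          exact hdisj hvq hvd
        have hvadj : G.Adj w v := hadj.symm
        have hOv : OddVtx G M v := by
          refine ⟨u, hu, q.concat hvadj, isPath_concat hqp hvadj hvq,
            isAlternatingWalk_concat hqalt hvadj ?_, ?_⟩
          · have hswv : s(w, v) ∉ M := by rwa [Sym2.eq_swap] at hm
            simp [hswv, Nat.even_iff.mp hqe]
          · rw [Walk.length_concat]
            exact Even.add_one hqe
        exact even_odd_disjoint hbip hmax ⟨u, hu, p, hp, halt, hev⟩ hOv
      · exact even_odd_disjoint hbip hmax hw ⟨u, hu, q, hqp, hqalt, hqo⟩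
    · have hOw : OddVtx G M w := by
        refine ⟨u, hu, p.concat hadj, isPath_concat hp hadj hws,
          isAlternatingWalk_concat halt hadj ?_, ?_⟩
        · simp [hm, Nat.even_iff.mp hev]
        · rw [Walk.length_concat]
          exact Even.add_one hev
      exact even_odd_disjoint hbip hmax hw hOw

lemma no_EU_edge [Fintype V] (hmax : IsMaximumMatching G M)
    {v w : V} (hadj : G.Adj v w) (hv : EvenVtx G M v) (hw : UnreachableVtx G M w) : False := by
  classical
  by_cases hm : s(v, w) ∈ M
  · have hvm : ¬ UnmatchedVtx M v := fun h => h _ hm (Sym2.mem_mk_left v w)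
    obtain ⟨x, hxodd, hxe, huniq⟩ := evenVtx_matched hmax.1 hv hvm
    have heq : s(v, w) = s(x, v) := huniq _ hm (Sym2.mem_mk_left v w)
    have hwx : w = x := by
      rcases Sym2.eq_iff.mp heq with ⟨h1, h2⟩ | ⟨h1, h2⟩
      · exact absurd h2.symm hadj.ne
      · exact h2
    exact oddVtx_not_unreachable (hwx ▸ hxodd) hw
  · obtain ⟨u, hu, p, hp, halt, hev⟩ := hv
    by_cases hws : w ∈ p.support
    · exact not_unreachable_of_mem_support hu hp halt hws hw
    · have hOw : OddVtx G M w := by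
        refine ⟨u, hu, p.concat hadj, isPath_concat hp hadj hws,
          isAlternatingWalk_concat halt hadj ?_, ?_⟩
        · simp [hm, Nat.even_iff.mp hev]
        · rw [Walk.length_concat]
          exact Even.add_one hev
      exact oddVtx_not_unreachable hOw hw

lemma unreachable_matched [Fintype V] (hbip : _root_.IsBipartite G) (hmax : IsMaximumMatching G M)
    {v : V} (hv : UnreachableVtx G M v) :
    ∃ w, UnreachableVtx G M w ∧ s(v, w) ∈ M ∧ ∀ e ∈ M, v ∈ e → e = s(v, w) := by
  have hvm : ¬ UnmatchedVtx M v := fun h => evenVtx_not_unreachable (evenVtx_of_unmatched h) hv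
  rw [UnmatchedVtx] at hvm
  push_neg at hvm
  obtain ⟨e, he, hve⟩ := hvm
  obtain ⟨w, rfl⟩ := Sym2.mem_iff_exists.mp hve
  have hadj : G.Adj v w := G.mem_edgeSet.mp (hmax.1.1 he)
  have huniq : ∀ e' ∈ M, v ∈ e' → e' = s(v, w) := fun e' he' hv' =>
    hmax.1.2 e' he' _ he v hv' (Sym2.mem_mk_left v w)
  refine ⟨w, ?_, he, huniq⟩
  rcases vtx_trichotomy G M w with hwE | hwO | hwU
  · exact absurd (no_EU_edge hmax hadj.symm hwE hv) id
  · exfalso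
    obtain ⟨w', hw'e, hw'E, hw'uniq⟩ := oddVtx_matched hmax hwO
    have heq : s(v, w) = s(w, w') := hw'uniq _ he (Sym2.mem_mk_right v w)
    have hvw' : v = w' := by
      rcases Sym2.eq_iff.mp heq with ⟨h1, h2⟩ | ⟨h1, h2⟩
      · exact absurd h1 hadj.ne
      · exact h1
    exact evenVtx_not_unreachable (hvw' ▸ hw'E) hv
  · exact hwU

end Structure

section Counting
variable {V : Type*} [Fintype V]

lemma sym2_rep {e : Sym2 V} (h : ¬ e.IsDiag) : ∃ x y, x ≠ y ∧ e = s(x, y) := by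
  induction e using Sym2.ind with
  | _ x y =>
    rw [Sym2.mk_isDiag_iff] at h
    exact ⟨x, y, h, rfl⟩

lemma two_mul_ncard_of_pairing {C : Set V} {N : Set (Sym2 V)}
    (hdiag : ∀ e ∈ N, ¬ e.IsDiag)
    (hcov : ∀ v ∈ C, ∃ e ∈ N, v ∈ e)
    (hsub : ∀ e ∈ N, ∀ x, x ∈ e → x ∈ C)
    (huniq : ∀ (x : V), ∀ e ∈ N, ∀ e' ∈ N, x ∈ e → x ∈ e' → e = e') :
    C.ncard = 2 * N.ncard := by
  classical
  have hCf : C.Finite := Set.toFinite C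
  have hNf : N.Finite := Set.toFinite N
  set tf : Sym2 V → Finset V := fun e => (Set.toFinite {x | x ∈ e}).toFinset with htf
  have hCeq : hCf.toFinset = hNf.toFinset.biUnion tf := by
    ext x
    simp only [Set.Finite.mem_toFinset, Finset.mem_biUnion, htf, Set.mem_setOf_eq]
    constructor
    · intro hx
      obtain ⟨e, he, hxe⟩ := hcov x hx
      exact ⟨e, he, hxe⟩
    · rintro ⟨e, he, hxe⟩
      exact hsub e he x hxe
  have hdisj : ∀ e ∈ hNf.toFinset, ∀ e' ∈ hNf.toFinset, e ≠ e' → Disjoint (tf e) (tf e') := by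
    intro e he e' he' hne
    rw [Finset.disjoint_left]
    intro x hx hx'
    exact hne (huniq x e (hNf.mem_toFinset.mp he) e' (hNf.mem_toFinset.mp he')
      ((Set.toFinite _).mem_toFinset.mp hx) ((Set.toFinite _).mem_toFinset.mp hx'))
  have hcard2 : ∀ e ∈ hNf.toFinset, (tf e).card = 2 := by
    intro e he
    obtain ⟨x, y, hxy, rfl⟩ := sym2_rep (hdiag e (hNf.mem_toFinset.mp he))
    have hset : {z | z ∈ s(x, y)} = ({x, y} : Set V) := by
      ext z
      simp [Sym2.mem_iff]
    rw [htf]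
    simp only
    rw [← Set.ncard_eq_toFinset_card _ (Set.toFinite _), hset, Set.ncard_pair hxy]
  calc C.ncard = hCf.toFinset.card := Set.ncard_eq_toFinset_card C hCf
    _ = (hNf.toFinset.biUnion tf).card := by rw [hCeq]
    _ = ∑ e ∈ hNf.toFinset, (tf e).card := Finset.card_biUnion hdisj
    _ = ∑ _e ∈ hNf.toFinset, 2 := Finset.sum_congr rfl hcard2
    _ = hNf.toFinset.card * 2 := by rw [Finset.sum_const, smul_eq_mul]
    _ = 2 * N.ncard := by rw [← Set.ncard_eq_toFinset_card N hNf, Nat.mul_comm]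

end Counting

section EdgeClass
open SimpleGraph
variable {V : Type*} [Fintype V] {G : SimpleGraph V} {M₀ : Set (Sym2 V)}

lemma edge_class (hbip : _root_.IsBipartite G) (h₀ : IsMaximumMatching G M₀) {e : Sym2 V}
    (he : e ∈ G.edgeSet) :
    (∃ x ∈ e, OddVtx G M₀ x) ∨ (∀ x ∈ e, UnreachableVtx G M₀ x) := by
  induction e using Sym2.ind with
  | _ a b =>
    have hadj : G.Adj a b := G.mem_edgeSet.mp he
    rcases vtx_trichotomy G M₀ a with hA | hA | hA
    · rcases vtx_trichotomy G M₀ b with hB | hB | hB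
      · exact absurd (no_EE_edge hbip h₀ hadj hA hB) id
      · exact Or.inl ⟨b, Sym2.mem_mk_right a b, hB⟩
      · exact absurd (no_EU_edge h₀ hadj hA hB) id
    · exact Or.inl ⟨a, Sym2.mem_mk_left a b, hA⟩
    · rcases vtx_trichotomy G M₀ b with hB | hB | hB
      · exact absurd (no_EU_edge h₀ hadj.symm hB hA) id
      · exact Or.inl ⟨b, Sym2.mem_mk_right a b, hB⟩
      · refine Or.inr fun x hx => ?_
        rcases Sym2.mem_iff.mp hx with rfl | rfl
        · exact hA
        · exact hB

end EdgeClass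

/-- Gallai–Edmonds, part (b): let `E`, `O`, `U` be the even, odd and
unreachable vertices of the finite bipartite graph `G₁` (with respect to some maximum
matching `M₀`).  In every maximum matching `M`, every vertex of `U` is matched to
another vertex of `U`, every vertex of `O` is matched to some vertex of `E`, no edge of
`M` joins a vertex of `O` to a vertex of `O ∪ U`, and `|M| = |O| + |U|/2`. -/
theorem gallaiEdmonds_structure
    {V : Type*} [Fintype V] (G₁ : SimpleGraph V) (hbip : IsBipartite G₁)
    (M₀ : Set (Sym2 V)) (h₀ : IsMaximumMatching G₁ M₀) :
    ∀ M : Set (Sym2 V), IsMaximumMatching G₁ M →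
      (∀ v, UnreachableVtx G₁ M₀ v → ∃ w, UnreachableVtx G₁ M₀ w ∧ s(v, w) ∈ M) ∧
      (∀ v, OddVtx G₁ M₀ v → ∃ w, EvenVtx G₁ M₀ w ∧ s(v, w) ∈ M) ∧
      (∀ v w, s(v, w) ∈ M → OddVtx G₁ M₀ v →
        ¬ (OddVtx G₁ M₀ w ∨ UnreachableVtx G₁ M₀ w)) ∧
      M.ncard = {v | OddVtx G₁ M₀ v}.ncard + {v | UnreachableVtx G₁ M₀ v}.ncard / 2 := by
  intro M hM
  classical
  set SO : Set V := {v | OddVtx G₁ M₀ v} with hSOdef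
  set SU : Set V := {v | UnreachableVtx G₁ M₀ v} with hSUdef
  -- partner function for odd vertices (w.r.t. M₀)
  set f : V → Sym2 V := fun v =>
    if h : OddVtx G₁ M₀ v then s(v, Classical.choose (oddVtx_matched h₀ h)) else s(v, v)
    with hfdef
  have hf : ∀ v (hv : OddVtx G₁ M₀ v), f v ∈ M₀ ∧ v ∈ f v ∧
      (∀ e ∈ M₀, v ∈ e → e = f v) ∧ ∃ w, f v = s(v, w) ∧ EvenVtx G₁ M₀ w := by
    intro v hv
    have hfv : f v = s(v, Classical.choose (oddVtx_matched h₀ hv)) := by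
      simp only [hfdef, dif_pos hv]
    obtain ⟨hw1, hw2, hw3⟩ := Classical.choose_spec (oddVtx_matched h₀ hv)
    rw [hfv]
    exact ⟨hw1, Sym2.mem_mk_left _ _, fun e he hve => hw3 e he hve, _, rfl, hw2⟩
  set AO : Set (Sym2 V) := {e | e ∈ M₀ ∧ ∃ x ∈ e, OddVtx G₁ M₀ x} with hAOdef
  set BU : Set (Sym2 V) := {e | e ∈ M₀ ∧ ∀ x ∈ e, UnreachableVtx G₁ M₀ x} with hBUdef
  have hsplit0 : M₀ = AO ∪ BU := by
    ext e
    constructor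
    · intro he
      rcases edge_class hbip h₀ (h₀.1.1 he) with h | h
      · exact Or.inl ⟨he, h⟩
      · exact Or.inr ⟨he, h⟩
    · rintro (h | h) <;> exact h.1
  have hdisj0 : Disjoint AO BU := by
    rw [Set.disjoint_left]
    rintro e ⟨he, x, hxe, hxodd⟩ ⟨_, hall⟩
    exact oddVtx_not_unreachable hxodd (hall x hxe)
  have hAOim : f '' SO = AO := by
    ext e
    constructor
    · rintro ⟨v, hv, rfl⟩
      obtain ⟨h1, h2, _, _⟩ := hf v hv
      exact ⟨h1, v, h2, hv⟩
    · rintro ⟨he, x, hxe, hxodd⟩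
      exact ⟨x, hxodd, ((hf x hxodd).2.2.1 e he hxe).symm⟩
  have hfInj : Set.InjOn f SO := by
    intro v hv v' hv' heq
    obtain ⟨_, _, _, w, hfw, hwE⟩ := hf v hv
    obtain ⟨_, _, _, w', hfw', hwE'⟩ := hf v' hv'
    rw [hfw, hfw'] at heq
    rcases Sym2.eq_iff.mp heq with ⟨h1, _⟩ | ⟨h1, _⟩
    · exact h1
    · exact absurd (even_odd_disjoint hbip h₀ (h1 ▸ hwE') hv) id
  have hcardAO : AO.ncard = SO.ncard := by
    rw [← hAOim, Set.ncard_image_of_injOn hfInj]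
  have hSU2 : SU.ncard = 2 * BU.ncard := by
    refine two_mul_ncard_of_pairing
      (fun e he => G₁.not_isDiag_of_mem_edgeSet (h₀.1.1 he.1)) ?_
      (fun e he x hx => he.2 x hx)
      (fun x e he e' he' => h₀.1.2 e he.1 e' he'.1 x)
    intro v hv
    obtain ⟨w, hwU, he, _⟩ := unreachable_matched hbip h₀ hv
    refine ⟨s(v, w), ⟨he, fun x hx => ?_⟩, Sym2.mem_mk_left v w⟩
    rcases Sym2.mem_iff.mp hx with rfl | rfl
    · exact hv
    · exact hwU
  have hM₀card : M₀.ncard = SO.ncard + BU.ncard := by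
    rw [hsplit0, Set.ncard_union_eq hdisj0 (Set.toFinite _) (Set.toFinite _), hcardAO]
  -- structure of M
  set MO : Set (Sym2 V) := {e | e ∈ M ∧ ∃ x ∈ e, OddVtx G₁ M₀ x} with hMOdef
  set MU : Set (Sym2 V) := {e | e ∈ M ∧ ∀ x ∈ e, UnreachableVtx G₁ M₀ x} with hMUdef
  have hsplitM : M = MO ∪ MU := by
    ext e
    constructor
    · intro he
      rcases edge_class hbip h₀ (hM.1.1 he) with h | h
      · exact Or.inl ⟨he, h⟩
      · exact Or.inr ⟨he, h⟩
    · rintro (h | h) <;> exact h.1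
  have hdisjM : Disjoint MO MU := by
    rw [Set.disjoint_left]
    rintro e ⟨he, x, hxe, hxodd⟩ ⟨_, hall⟩
    exact oddVtx_not_unreachable hxodd (hall x hxe)
  set g : Sym2 V → V := fun e =>
    if h : ∃ x, x ∈ e ∧ OddVtx G₁ M₀ x then Classical.choose h else (Quot.out e).1
    with hgdef
  have hg : ∀ e ∈ MO, g e ∈ e ∧ g e ∈ SO := by
    rintro e ⟨heM, hex⟩
    have hge : g e = Classical.choose hex := by
      simp only [hgdef, dif_pos hex]
    obtain ⟨h1, h2⟩ := Classical.choose_spec hex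
    rw [hge]
    exact ⟨h1, h2⟩
  have hgInj : Set.InjOn g MO := by
    intro e he e' he' heq
    exact hM.1.2 e he.1 e' he'.1 (g e) (hg e he).1 (heq ▸ (hg e' he').1)
  have hMOle : MO.ncard ≤ SO.ncard :=
    Set.ncard_le_ncard_of_injOn g (fun e he => (hg e he).2) hgInj (Set.toFinite _)
  set CU : Set V := {v | ∃ e, e ∈ MU ∧ v ∈ e} with hCUdef
  have hCU2 : CU.ncard = 2 * MU.ncard := by
    refine two_mul_ncard_of_pairing
      (fun e he => G₁.not_isDiag_of_mem_edgeSet (hM.1.1 he.1))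
      (fun v hv => hv) (fun e he x hx => ⟨e, he, hx⟩)
      (fun x e he e' he' => hM.1.2 e he.1 e' he'.1 x)
  have hCUsub : CU ⊆ SU := by
    rintro v ⟨e, he, hv⟩
    exact he.2 v hv
  have hCUle : CU.ncard ≤ SU.ncard := Set.ncard_le_ncard hCUsub (Set.toFinite _)
  have hMUle : MU.ncard ≤ BU.ncard := by omega
  have hMcard' : M.ncard = MO.ncard + MU.ncard := by
    rw [hsplitM, Set.ncard_union_eq hdisjM (Set.toFinite _) (Set.toFinite _)]
  have hMM₀ : M.ncard = M₀.ncard := le_antisymm (h₀.2 M hM.1) (hM.2 M₀ h₀.1)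
  have hMOeq : MO.ncard = SO.ncard := by omega
  have hMUeq : MU.ncard = BU.ncard := by omega
  have hgimg : g '' MO = SO := by
    refine Set.eq_of_subset_of_ncard_le ?_ ?_ (Set.toFinite _)
    · rintro x ⟨e, he, rfl⟩
      exact (hg e he).2
    · rw [Set.ncard_image_of_injOn hgInj, hMOeq]
  have hCUeq : CU = SU := by
    refine Set.eq_of_subset_of_ncard_le hCUsub (by omega) (Set.toFinite _)
  have key2 : ∀ v, OddVtx G₁ M₀ v → ∃ w, EvenVtx G₁ M₀ w ∧ s(v, w) ∈ M := by
    intro v hv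
    have hvSO : v ∈ SO := hv
    rw [← hgimg] at hvSO
    obtain ⟨e, heMO, hge⟩ := hvSO
    have hveE : v ∈ e := hge ▸ (hg e heMO).1
    obtain ⟨w, rfl⟩ := Sym2.mem_iff_exists.mp hveE
    have hadj : G₁.Adj v w := G₁.mem_edgeSet.mp (hM.1.1 heMO.1)
    refine ⟨w, ?_, heMO.1⟩
    rcases vtx_trichotomy G₁ M₀ w with hE | hO | hU
    · exact hE
    · exfalso
      have hwSO : w ∈ SO := hO
      rw [← hgimg] at hwSO
      obtain ⟨e₂, he₂MO, hge₂⟩ := hwSO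
      have hwe₂ : w ∈ e₂ := hge₂ ▸ (hg e₂ he₂MO).1
      have he₂eq : e₂ = s(v, w) :=
        hM.1.2 e₂ he₂MO.1 _ heMO.1 w hwe₂ (Sym2.mem_mk_right v w)
      rw [he₂eq] at hge₂
      rw [hge₂] at hge
      exact hadj.ne hge.symm
    · exfalso
      have hwCU : w ∈ CU := hCUeq ▸ (hU : w ∈ SU)
      obtain ⟨e₃, he₃MU, hwe₃⟩ := hwCU
      have he₃eq : e₃ = s(v, w) :=
        hM.1.2 e₃ he₃MU.1 _ heMO.1 w hwe₃ (Sym2.mem_mk_right v w)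
      have hvU : UnreachableVtx G₁ M₀ v := (he₃eq ▸ he₃MU).2 v (Sym2.mem_mk_left v w)
      exact oddVtx_not_unreachable hv hvU
  refine ⟨?_, ?_, ?_, ?_⟩
  · intro v hv
    have hvCU : v ∈ CU := hCUeq ▸ (hv : v ∈ SU)
    obtain ⟨e, heMU, hve⟩ := hvCU
    obtain ⟨w, rfl⟩ := Sym2.mem_iff_exists.mp hve
    exact ⟨w, heMU.2 w (Sym2.mem_mk_right v w), heMU.1⟩
  · exact key2
  · intro v w hvw hv
    obtain ⟨w', hw'E, hw'M⟩ := key2 v hv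
    have heq : s(v, w) = s(v, w') :=
      hM.1.2 _ hvw _ hw'M v (Sym2.mem_mk_left v w) (Sym2.mem_mk_left v w')
    have hne : v ≠ w := (G₁.mem_edgeSet.mp (hM.1.1 hvw)).ne
    have hww' : w = w' := by
      rcases Sym2.eq_iff.mp heq with ⟨_, h2⟩ | ⟨h1, h2⟩
      · exact h2
      · exact absurd h2.symm hne
    subst hww'
    rintro (hO | hU)
    · exact even_odd_disjoint hbip h₀ hw'E hO
    · exact evenVtx_not_unreachable hw'E hU
  · have hdiv : SU.ncard / 2 = BU.ncard := by omega
    rw [hdiv]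
    omega
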